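/- For every integer n ≥ 1, every α > 0 and every t > 0, the recurrence coefficient α_n(t) admits the integral representation α_n(t) = 2n + 1 + α + t γ_n(t)² ∫_0^∞ π_n(y; t)² w(y; t, α)/y dy; equivalently, a_n(t) = t γ_n(t)² ∫_0^∞ π_n(y; t)² w(y; t, α)/y dy. -/

import Mathlib

open MeasureTheory Set Real Filter Topology Polynomial

lemma auxW_tendsto_atTop (p : Polynomial ℝ) (β c t : ℝ) (hc : 0 < c) (ht : 0 < t) :
    Tendsto (fun x : ℝ => p.eval x * (x ^ β * Real.exp (-(c * x) - t / x))) atTop (𝓝 0) := by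
  set d := p.natDegree with hd
  set S : ℝ := ∑ i ∈ Finset.range (d + 1), |p.coeff i| with hS
  have hmaj : Tendsto (fun x : ℝ => S * (x ^ ((d : ℝ) + β) * Real.exp (-c * x))) atTop (𝓝 (S * 0)) :=
    (tendsto_rpow_mul_exp_neg_mul_atTop_nhds_zero ((d : ℝ) + β) c hc).const_mul S
  rw [mul_zero] at hmaj
  apply squeeze_zero_norm' _ hmaj
  filter_upwards [eventually_ge_atTop (1 : ℝ)] with x hx1
  have hx0 : (0 : ℝ) < x := lt_of_lt_of_le one_pos hx1
  have hpb : |p.eval x| ≤ S * x ^ d := by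
    rw [Polynomial.eval_eq_sum_range]
    refine (Finset.abs_sum_le_sum_abs _ _).trans ?_
    rw [hS, Finset.sum_mul]
    refine Finset.sum_le_sum fun i hi => ?_
    rw [abs_mul, abs_pow, abs_of_pos hx0]
    exact mul_le_mul_of_nonneg_left
      (pow_le_pow_right₀ hx1 (Nat.lt_succ_iff.mp (Finset.mem_range.mp hi))) (abs_nonneg _)
  have hexp : Real.exp (-(c * x) - t / x) ≤ Real.exp (-c * x) := by
    apply Real.exp_le_exp.mpr
    have : 0 ≤ t / x := div_nonneg ht.le hx0.le
    nlinarith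
  have hrpos : (0:ℝ) ≤ x ^ β := Real.rpow_nonneg hx0.le β
  have hnorm : ‖p.eval x * (x ^ β * Real.exp (-(c * x) - t / x))‖
      = |p.eval x| * (x ^ β * Real.exp (-(c * x) - t / x)) := by
    rw [Real.norm_eq_abs, abs_mul]
    congr 1
    rw [abs_of_nonneg (mul_nonneg hrpos (Real.exp_pos _).le)]
  rw [hnorm]
  have h1 : |p.eval x| * (x ^ β * Real.exp (-(c * x) - t / x))
      ≤ (S * x ^ d) * (x ^ β * Real.exp (-c * x)) := by
    apply mul_le_mul hpb (mul_le_mul_of_nonneg_left hexp hrpos)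
      (mul_nonneg hrpos (Real.exp_pos _).le)
    positivity
  refine h1.trans (le_of_eq ?_)
  rw [Real.rpow_add hx0, Real.rpow_natCast]
  ring

lemma auxW_tendsto_zero (p : Polynomial ℝ) (β c t : ℝ) (ht : 0 < t) :
    Tendsto (fun x : ℝ => p.eval x * (x ^ β * Real.exp (-(c * x) - t / x)))
      (𝓝[>] (0:ℝ)) (𝓝 0) := by
  have hG : Tendsto (fun u : ℝ => β * Real.log u + t * u) atTop atTop := by
    have hlo : (fun u : ℝ => β * Real.log u) =o[atTop] (fun u : ℝ => u) :=
      (Real.isLittleO_log_id_atTop.const_mul_left β)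
    have hev : ∀ᶠ u : ℝ in atTop, t / 2 * u ≤ β * Real.log u + t * u := by
      filter_upwards [hlo.bound (by positivity : (0:ℝ) < t / 2), eventually_ge_atTop (0:ℝ)]
        with u hu hu0
      have : |β * Real.log u| ≤ t / 2 * u := by
        simpa [abs_of_nonneg hu0, abs_mul] using hu
      have h2 := neg_abs_le (β * Real.log u)
      nlinarith
    exact tendsto_atTop_mono' _ hev
      (Tendsto.const_mul_atTop (by positivity) tendsto_id)
  have hmain : Tendsto (fun x : ℝ => β * Real.log x - t / x) (𝓝[>] (0:ℝ)) atBot := by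
    have comp : Tendsto (fun x : ℝ => -(β * Real.log x⁻¹ + t * x⁻¹)) (𝓝[>] (0:ℝ)) atBot :=
      tendsto_neg_atTop_atBot.comp (hG.comp tendsto_inv_nhdsGT_zero)
    apply comp.congr'
    filter_upwards [self_mem_nhdsWithin] with x (hx : (0:ℝ) < x)
    rw [Real.log_inv]
    field_simp
    ring
  have hexp : Tendsto (fun x : ℝ => Real.log x * β + (-(c * x) - t / x)) (𝓝[>] (0:ℝ)) atBot := by
    have h2 : Tendsto (fun x : ℝ => -(c * x)) (𝓝[>] (0:ℝ)) (𝓝 (-(c * 0))) := by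
      apply Tendsto.mono_left _ nhdsWithin_le_nhds
      exact (continuous_const.mul continuous_id).neg.tendsto 0
    have := hmain.atBot_add h2
    apply this.congr'
    filter_upwards [self_mem_nhdsWithin] with x (hx : (0:ℝ) < x)
    ring
  have hpe : Tendsto (fun x : ℝ => p.eval x) (𝓝[>] (0:ℝ)) (𝓝 (p.eval 0)) :=
    (p.continuous_aeval.tendsto 0).mono_left nhdsWithin_le_nhds
  have hE : Tendsto (fun x : ℝ => Real.exp (Real.log x * β + (-(c * x) - t / x)))
      (𝓝[>] (0:ℝ)) (𝓝 0) := Real.tendsto_exp_atBot.comp hexp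
  have := hpe.mul hE
  rw [mul_zero] at this
  apply this.congr'
  filter_upwards [self_mem_nhdsWithin] with x (hx : (0:ℝ) < x)
  rw [Real.exp_add, Real.rpow_def_of_pos hx]

lemma auxW_contOn (p : Polynomial ℝ) (β c t : ℝ) :
    ContinuousOn (fun x : ℝ => p.eval x * (x ^ β * Real.exp (-(c * x) - t / x))) (Ioi (0:ℝ)) := by
  intro x hx
  have hx0 : (0:ℝ) < x := hx
  apply ContinuousAt.continuousWithinAt
  apply ContinuousAt.mul (p.continuous_aeval.continuousAt)
  apply ContinuousAt.mul (Real.continuousAt_rpow_const x β (Or.inl hx0.ne'))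
  apply Real.continuous_exp.continuousAt.comp
  exact ((continuous_const.mul continuous_id).neg.continuousAt).sub
    (continuousAt_const.div continuousAt_id hx0.ne')

lemma auxW_bounded {g : ℝ → ℝ} (hc : ContinuousOn g (Ioi 0))
    (h0 : Tendsto g (𝓝[>] (0:ℝ)) (𝓝 0)) (hT : Tendsto g atTop (𝓝 0)) :
    ∃ C : ℝ, ∀ x ∈ Ioi (0:ℝ), |g x| ≤ C := by
  have e0 : {x : ℝ | |g x| ≤ 1} ∈ 𝓝[>] (0:ℝ) := by
    have := Metric.tendsto_nhds.mp h0 1 one_pos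
    filter_upwards [this] with x hx
    rw [Real.dist_eq, sub_zero] at hx
    exact hx.le
  obtain ⟨ε, hε, hball⟩ := mem_nhdsGT_iff_exists_Ioo_subset.mp e0
  have hε0 : (0:ℝ) < ε := hε
  obtain ⟨M, hM⟩ := eventually_atTop.mp (Metric.tendsto_nhds.mp hT 1 one_pos)
  set b := max M ε with hb
  obtain ⟨C, hC⟩ := (isCompact_Icc (a := ε/2) (b := b)).exists_bound_of_continuousOn
    (hc.mono (fun y hy => lt_of_lt_of_le (by positivity) hy.1))
  refine ⟨max C 1, fun x hx => ?_⟩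
  have hx0 : (0:ℝ) < x := hx
  rcases lt_or_ge x ε with hlt | hge
  · exact le_trans (hball ⟨hx0, hlt⟩) (le_max_right _ _)
  · rcases le_or_gt x b with hle | hgt
    · refine le_trans ?_ (le_max_left C 1)
      have := hC x ⟨by linarith, hle⟩
      rwa [Real.norm_eq_abs] at this
    · have : M ≤ x := le_trans (le_max_left M ε) hgt.le
      have := hM x this
      rw [Real.dist_eq, sub_zero] at this
      exact le_trans this.le (le_max_right _ _)

lemma auxW_integrable (p : Polynomial ℝ) (β t : ℝ) (ht : 0 < t) :
    IntegrableOn (fun x : ℝ => p.eval x * (x ^ β * Real.exp (-x - t / x))) (Ioi (0:ℝ)) := by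
  set φ : ℝ → ℝ := fun x => p.eval x * (x ^ β * Real.exp (-((1/2:ℝ) * x) - t / x)) with hφ
  obtain ⟨C, hC⟩ := auxW_bounded (auxW_contOn p β (1/2) t)
    (auxW_tendsto_zero p β (1/2) t ht) (auxW_tendsto_atTop p β (1/2) t (by norm_num) ht)
  have hkey : ∀ x : ℝ, p.eval x * (x ^ β * Real.exp (-x - t / x))
      = φ x * Real.exp (-(1/2 : ℝ) * x) := by
    intro x
    rw [hφ]
    simp only
    rw [mul_assoc, mul_assoc, mul_comm (Real.exp _) (Real.exp _), ← Real.exp_add]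
    congr 3
    ring
  have hmeas : AEStronglyMeasurable (fun x : ℝ => p.eval x * (x ^ β * Real.exp (-x - t / x)))
      (volume.restrict (Ioi (0:ℝ))) := by
    have := auxW_contOn p β 1 t
    refine ContinuousOn.aestronglyMeasurable (ContinuousOn.congr this ?_) measurableSet_Ioi
    intro x hx
    simp only
    congr 3
    ring
  refine Integrable.mono' ((exp_neg_integrableOn_Ioi 0 (by norm_num : (0:ℝ) < 1/2)).const_mul C)
    hmeas ?_
  rw [ae_restrict_iff' measurableSet_Ioi]
  filter_upwards with x hx
  rw [Real.norm_eq_abs, hkey x, abs_mul, abs_of_pos (Real.exp_pos _)]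
  exact mul_le_mul_of_nonneg_right (hC x hx) (Real.exp_pos _).le

noncomputable def wInt (α t : ℝ) (r : Polynomial ℝ) : ℝ :=
  ∫ x in Ioi (0:ℝ), r.eval x * (x ^ α * Real.exp (-x - t / x))

lemma wInt_zero (α t : ℝ) : wInt α t 0 = 0 := by
  unfold wInt; simp

lemma wInt_add (α t : ℝ) (ht : 0 < t) (r s : Polynomial ℝ) :
    wInt α t (r + s) = wInt α t r + wInt α t s := by
  unfold wInt
  simp only [Polynomial.eval_add, add_mul]
  exact integral_add (auxW_integrable r α t ht) (auxW_integrable s α t ht)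

lemma wInt_smul (α t : ℝ) (c : ℝ) (r : Polynomial ℝ) :
    wInt α t (Polynomial.C c * r) = c * wInt α t r := by
  unfold wInt
  simp only [Polynomial.eval_mul, Polynomial.eval_C, mul_assoc]
  exact MeasureTheory.integral_const_mul c _

lemma wInt_sub (α t : ℝ) (ht : 0 < t) (r s : Polynomial ℝ) :
    wInt α t (r - s) = wInt α t r - wInt α t s := by
  have h1 : r - s = r + Polynomial.C (-1:ℝ) * s := by
    simp [Polynomial.C_neg]; ring
  rw [h1, wInt_add α t ht, wInt_smul]; ring

lemma auxW_ibp (α t : ℝ) (hα : 0 < α) (ht : 0 < t) (f : Polynomial ℝ) :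
    (∫ x in Ioi (0:ℝ),
        ((Polynomial.X * Polynomial.derivative f + Polynomial.C (α+1) * f
            - Polynomial.X * f).eval x * (x ^ α * Real.exp (-x - t / x))
          + t * (f.eval x * (x ^ (α-1) * Real.exp (-x - t / x))))) = 0 := by
  set g₁ : Polynomial ℝ := Polynomial.X * Polynomial.derivative f + Polynomial.C (α+1) * f
      - Polynomial.X * f with hg₁
  set F : ℝ → ℝ := fun x => f.eval x * (x ^ (α+1) * Real.exp (-x - t / x)) with hF
  set D : ℝ → ℝ := fun x => g₁.eval x * (x ^ α * Real.exp (-x - t / x))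
      + t * (f.eval x * (x ^ (α-1) * Real.exp (-x - t / x))) with hD
  have hderiv : ∀ x ∈ Ioi (0:ℝ), HasDerivAt F (D x) x := by
    intro x hx
    have hx0 : (0:ℝ) < x := hx
    have h1 : HasDerivAt (fun y : ℝ => f.eval y) (f.derivative.eval x) x := f.hasDerivAt x
    have h2 : HasDerivAt (fun y : ℝ => y ^ (α+1)) ((α+1) * x ^ α) x := by
      have := Real.hasDerivAt_rpow_const (x := x) (p := α+1) (Or.inl hx0.ne')
      simpa [add_sub_cancel_right] using this
    have h3 : HasDerivAt (fun y : ℝ => -y - t / y) (-1 - t * -(x^2)⁻¹) x := by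
      have hinv : HasDerivAt (fun y : ℝ => y⁻¹) (-(x^2)⁻¹) x := hasDerivAt_inv hx0.ne'
      have : HasDerivAt (fun y : ℝ => -y - t * y⁻¹) (-1 - t * -(x^2)⁻¹) x :=
        (hasDerivAt_id x).neg.sub (hinv.const_mul t)
      simpa [div_eq_mul_inv] using this
    have h4 := h3.exp
    have h5 := h2.mul h4
    have h6 : HasDerivAt F _ x := h1.mul h5
    convert h6 using 1
    have hα1 : x ^ (α+1) = x ^ α * x := by rw [Real.rpow_add hx0, Real.rpow_one]
    have hα2 : x ^ (α-1) = x ^ α / x := by rw [Real.rpow_sub hx0, Real.rpow_one]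
    rw [hD, hg₁]
    simp only [Polynomial.eval_sub, Polynomial.eval_add, Polynomial.eval_mul,
      Polynomial.eval_C, Polynomial.eval_X]
    rw [hα1, hα2]
    field_simp
    ring
  have hF0 : F 0 = 0 := by
    rw [hF]
    simp [Real.zero_rpow (by positivity : (0:ℝ) < α + 1).ne']
  have hcont : ContinuousWithinAt F (Ici (0:ℝ)) 0 := by
    rw [← continuousWithinAt_Ioi_iff_Ici]
    unfold ContinuousWithinAt
    rw [hF0]
    simpa [one_mul] using auxW_tendsto_zero f (α+1) 1 t ht
  have htop : Tendsto F atTop (𝓝 0) := by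
    simpa [one_mul] using auxW_tendsto_atTop f (α+1) 1 t one_pos ht
  have hDint : IntegrableOn D (Ioi (0:ℝ)) :=
    (auxW_integrable g₁ α t ht).add ((auxW_integrable f (α-1) t ht).const_mul t)
  have hres := integral_Ioi_of_hasDerivAt_of_tendsto hcont hderiv hDint htop
  rw [hF0, sub_zero] at hres
  exact hres


/-- For every integer `n ≥ 1`, `α > 0`, `t > 0`, the recurrence coefficient
`α_n(t)` for the weight `w(x) = x^α e^{-x-t/x}` admits the integral representation
`α_n(t) = 2n + 1 + α + t γ_n(t)² ∫_0^∞ π_n(y)² w(y)/y dy`, where `γ_n(t) = h_n(t)^{-1/2}`. -/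
theorem recurrence_coeff_integral_representation
    (α : ℝ) (hα : 0 < α) (t : ℝ) (ht : 0 < t) (n : ℕ) (hn : 1 ≤ n)
    (P : ℕ → ℝ → ℝ → ℝ) (h : ℕ → ℝ → ℝ) (A B : ℕ → ℝ → ℝ)
    (hmonic : ∀ m : ℕ, ∀ τ > (0:ℝ), ∃ p : Polynomial ℝ,
      p.Monic ∧ p.natDegree = m ∧ ∀ x, P m τ x = p.eval x)
    (horth : ∀ j k : ℕ, ∀ τ > (0:ℝ),
      (∫ x in Ioi (0:ℝ), P j τ x * P k τ x * (x ^ α * Real.exp (-x - τ / x)))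
        = if j = k then h j τ else 0)
    (hpos : ∀ j : ℕ, ∀ τ > (0:ℝ), 0 < h j τ)
    (hrec : ∀ m : ℕ, 1 ≤ m → ∀ τ > (0:ℝ), ∀ x : ℝ,
      x * P m τ x = P (m + 1) τ x + A m τ * P m τ x + B m τ * P (m - 1) τ x) :
    A n t = 2 * n + 1 + α +
      t * ((h n t) ^ (-(1:ℝ) / 2)) ^ 2 *
        ∫ y in Ioi (0:ℝ), (P n t y) ^ 2 * (y ^ α * Real.exp (-y - t / y)) / y := by
  choose q hqm hqd hqe using fun m => hmonic m t ht
  -- orthogonality in polynomial form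
  have horth' : ∀ j k : ℕ, wInt α t (q j * q k) = if j = k then h j t else 0 := by
    intro j k
    have H := horth j k t ht
    simp only [hqe] at H
    unfold wInt
    simp only [Polynomial.eval_mul]
    exact H
  -- orthogonality to lower degrees
  have hlow : ∀ d : ℕ, d ≤ n → ∀ r : Polynomial ℝ, (r = 0 ∨ r.natDegree < d) →
      wInt α t (q n * r) = 0 := by
    intro d
    induction d with
    | zero =>
      rintro _ r (rfl | hdeg)
      · rw [mul_zero, wInt_zero]
      · exact absurd hdeg (Nat.not_lt_zero _)
    | succ d ih =>
      rintro hdn r (rfl | hdeg)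
      · rw [mul_zero, wInt_zero]
      · set c := r.coeff d with hc
        set s := r - Polynomial.C c * q d with hs
        have hqdc : (q d).coeff d = 1 := by
          have := (hqm d).coeff_natDegree
          rwa [hqd d] at this
        have hsc : s.coeff d = 0 := by
          rw [hs, Polynomial.coeff_sub, Polynomial.coeff_C_mul, hqdc, mul_one, hc, sub_self]
        have hsd : s = 0 ∨ s.natDegree < d := by
          by_cases h0 : s = 0
          · exact Or.inl h0
          · right
            have hle : s.natDegree ≤ d := by
              rw [hs]
              refine le_trans (Polynomial.natDegree_sub_le _ _) (max_le ?_ ?_)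
              · exact Nat.lt_succ_iff.mp hdeg
              · exact le_trans (Polynomial.natDegree_C_mul_le _ _) (le_of_eq (hqd d))
            rcases lt_or_eq_of_le hle with hlt | heq
            · exact hlt
            · exfalso
              have hl := Polynomial.leadingCoeff_ne_zero.mpr h0
              rw [Polynomial.leadingCoeff, heq] at hl
              exact hl hsc
        have h1 : wInt α t (q n * s) = 0 := ih (le_trans (Nat.le_succ d) hdn) s hsd
        have h2 : wInt α t (q n * q d) = 0 := by
          have := horth' n d
          rwa [if_neg (by omega : n ≠ d)] at this
        have hsplit : q n * r = q n * s + Polynomial.C c * (q n * q d) := by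
          rw [hs]; ring
        rw [hsplit, wInt_add α t ht, wInt_smul, h1, h2, mul_zero, add_zero]
  have hwrap : ∀ r : Polynomial ℝ, (r = 0 ∨ r.natDegree < n) → wInt α t (q n * r) = 0 :=
    hlow n le_rfl
  have hnn : wInt α t (q n * q n) = h n t := by
    have := horth' n n
    rwa [if_pos rfl] at this
  -- recurrence in integral form
  have hXnn : wInt α t (Polynomial.X * (q n * q n)) = A n t * h n t := by
    have hpoly : (Polynomial.X : Polynomial ℝ) * (q n * q n)
        = q (n+1) * q n + Polynomial.C (A n t) * (q n * q n)
          + Polynomial.C (B n t) * (q (n-1) * q n) := by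
      apply Polynomial.funext
      intro x
      have hr := hrec n hn t ht x
      simp only [Polynomial.eval_mul, Polynomial.eval_add, Polynomial.eval_C,
        Polynomial.eval_X, ← hqe]
      linear_combination (P n t x) * hr
    rw [hpoly, wInt_add α t ht, wInt_add α t ht, wInt_smul, wInt_smul]
    have e1 := horth' (n+1) n
    rw [if_neg (by omega)] at e1
    have e2 := horth' (n-1) n
    rw [if_neg (by omega : n - 1 ≠ n)] at e2
    rw [e1, hnn, e2]
    ring
  -- the derivative identity
  have hqnc : (q n).coeff n = 1 := by
    have := (hqm n).coeff_natDegree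
    rwa [hqd n] at this
  have hder : wInt α t (q n * (Polynomial.X * Polynomial.derivative (q n))) = n * h n t := by
    set r := Polynomial.X * Polynomial.derivative (q n) - Polynomial.C (n:ℝ) * q n with hr
    have hn1 : n - 1 + 1 = n := Nat.succ_pred_eq_of_pos hn
    have hrc : r.coeff n = 0 := by
      rw [hr, Polynomial.coeff_sub, Polynomial.coeff_C_mul]
      have hX := Polynomial.coeff_X_mul (Polynomial.derivative (q n)) (n-1)
      rw [hn1] at hX
      rw [hX, Polynomial.coeff_derivative, hn1, hqnc, mul_one, one_mul]
      have hcast : ((n-1 : ℕ) : ℝ) + 1 = (n : ℝ) := by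
        rw [Nat.cast_sub hn]; ring
      rw [hcast, sub_self]
    have hrdeg : r = 0 ∨ r.natDegree < n := by
      by_cases h0 : r = 0
      · exact Or.inl h0
      · right
        have hle : r.natDegree ≤ n := by
          rw [hr]
          refine le_trans (Polynomial.natDegree_sub_le _ _) (max_le ?_ ?_)
          · refine le_trans (Polynomial.natDegree_mul_le) ?_
            have hd := Polynomial.natDegree_derivative_le (q n)
            rw [hqd n] at hd
            calc (Polynomial.X : Polynomial ℝ).natDegree
                  + (Polynomial.derivative (q n)).natDegree
                ≤ 1 + (n-1) := add_le_add (le_of_eq Polynomial.natDegree_X) hd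
              _ = n := by omega
          · exact le_trans (Polynomial.natDegree_C_mul_le _ _) (le_of_eq (hqd n))
        rcases lt_or_eq_of_le hle with hlt | heq
        · exact hlt
        · exfalso
          have hl := Polynomial.leadingCoeff_ne_zero.mpr h0
          rw [Polynomial.leadingCoeff, heq] at hl
          exact hl hrc
    have h1 : wInt α t (q n * r) = 0 := hwrap r hrdeg
    have hsplit : q n * (Polynomial.X * Polynomial.derivative (q n))
        = q n * r + Polynomial.C (n:ℝ) * (q n * q n) := by
      rw [hr]; ring
    rw [hsplit, wInt_add α t ht, wInt_smul, h1, hnn, zero_add]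
  -- integration by parts
  set f : Polynomial ℝ := q n * q n with hf
  set J : ℝ := ∫ x in Ioi (0:ℝ), f.eval x * (x ^ (α-1) * Real.exp (-x - t / x)) with hJ
  have hibp := auxW_ibp α t hα ht f
  rw [integral_add (auxW_integrable _ α t ht)
    ((auxW_integrable f (α-1) t ht).const_mul t), MeasureTheory.integral_const_mul] at hibp
  have hibp' : wInt α t (Polynomial.X * Polynomial.derivative f + Polynomial.C (α+1) * f
      - Polynomial.X * f) + t * J = 0 := hibp
  have hC2 : (Polynomial.C (2:ℝ)) = 2 := map_ofNat Polynomial.C 2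
  have hXfd : wInt α t (Polynomial.X * Polynomial.derivative f) = 2 * ((n : ℝ) * h n t) := by
    have hfd : (Polynomial.X : Polynomial ℝ) * Polynomial.derivative f
        = Polynomial.C (2:ℝ) * (q n * (Polynomial.X * Polynomial.derivative (q n))) := by
      rw [hf, Polynomial.derivative_mul, hC2]
      ring
    rw [hfd, wInt_smul, hder]
  rw [wInt_sub α t ht, wInt_add α t ht, wInt_smul, hXfd, hXnn] at hibp'
  rw [hnn] at hibp'
  -- hibp' : 2 * (n * h n t) + (α+1) * h n t - A n t * h n t + t * J = 0
  have hhne : h n t ≠ 0 := (hpos n t ht).ne'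
  have hJg : (∫ y in Ioi (0:ℝ), (P n t y) ^ 2 * (y ^ α * Real.exp (-y - t / y)) / y) = J := by
    rw [hJ]
    apply setIntegral_congr_fun measurableSet_Ioi
    intro y hy
    have hy0 : (0:ℝ) < y := hy
    simp only [hqe, hf, Polynomial.eval_mul]
    rw [Real.rpow_sub hy0, Real.rpow_one, pow_two]
    field_simp
  have hrpow : ((h n t) ^ (-(1:ℝ)/2)) ^ 2 = (h n t)⁻¹ := by
    rw [sq, ← Real.rpow_add (hpos n t ht)]
    norm_num [Real.rpow_neg_one]
  rw [hJg, hrpow]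
  have key : A n t * h n t = (2 * (n:ℝ) + 1 + α) * h n t + t * J := by linarith [hibp']
  field_simp
  linarith [key]
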